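/- Let $m > 1$ be an integer, and let $h/k \in \mathcal{F}(\mathbb{B}(2m),m)$ (in lowest terms) with $0/1 < h/k \le 1/2$. Let $x_0$ be the (unique) integer satisfying $h x_0 \equiv 1 \pmod{k-h}$ and $m - k + h + 1 \le x_0 \le m$. Then the fraction with numerator $(h x_0 - 1)/(k-h)$ and denominator $(k x_0 - 1)/(k-h)$ (both of which are integers) is the fraction immediately preceding $h/k$ in $\mathcal{F}(\mathbb{B}(2m),m)$, i.e., it is the largest element of $\mathcal{F}(\mathbb{B}(2m),m)$ that is strictly less than $h/k$. -/
import Mathlib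


/-- The Farey subsequence `𝓕(𝔹(2m), m)`: rationals `q` with `0 ≤ q ≤ 1` whose
reduced fraction `h/k` satisfies `k ≤ 2m`, `h ≤ m` and `k - h ≤ m`. -/
def fareyB2 (m : ℕ) : Set ℚ :=
  {q : ℚ | 0 ≤ q ∧ q ≤ 1 ∧ q.den ≤ 2 * m ∧ q.num ≤ (m : ℤ) ∧
    (q.den : ℤ) - q.num ≤ (m : ℤ)}

/-- Predecessor formula in `𝓕(𝔹(2m), m)`: for `0/1 < h/k ≤ 1/2` in the sequence and
`x₀` with `h·x₀ ≡ 1 (mod k-h)` and `m-k+h+1 ≤ x₀ ≤ m`, the numbers `(h·x₀-1)/(k-h)` and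
`(k·x₀-1)/(k-h)` are integers, and the corresponding fraction is the fraction immediately
preceding `h/k`, i.e. the greatest element of `𝓕(𝔹(2m), m)` strictly below `h/k`. -/
theorem fareyB2_pred (m : ℕ) (hm : 1 < m) (q : ℚ) (hq : q ∈ fareyB2 m)
    (hq0 : 0 < q) (hq2 : q ≤ 1 / 2) (x₀ : ℤ)
    (hmod : q.num * x₀ ≡ 1 [ZMOD ((q.den : ℤ) - q.num)])
    (hlo : (m : ℤ) - (q.den : ℤ) + q.num + 1 ≤ x₀) (hhi : x₀ ≤ (m : ℤ)) :
    ((q.den : ℤ) - q.num) ∣ (q.num * x₀ - 1) ∧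
    ((q.den : ℤ) - q.num) ∣ ((q.den : ℤ) * x₀ - 1) ∧
    IsGreatest {f ∈ fareyB2 m | f < q}
      (((q.num * x₀ - 1 : ℤ) : ℚ) / (((q.den : ℤ) * x₀ - 1 : ℤ) : ℚ)) := by
  set h : ℤ := q.num with hh
  set k : ℤ := (q.den : ℤ) with hk
  have hden_pos : 0 < k := by positivity
  have hh1 : 1 ≤ h := Rat.num_pos.mpr hq0
  obtain ⟨-, -, hden2m, hnum_m, hdiff_m⟩ := hq
  -- k ≥ 2h from q ≤ 1/2
  have hqeq : q = (h : ℚ) / (k : ℚ) := by rw [hh, hk]; exact (Rat.num_div_den q).symm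
  have h2h : 2 * h ≤ k := by
    have : (h : ℚ) / (k : ℚ) ≤ 1 / 2 := hqeq ▸ hq2
    rw [div_le_div_iff₀ (by exact_mod_cast hden_pos) (by norm_num)] at this
    have h2 : h * 2 ≤ 1 * k := by exact_mod_cast this
    linarith
  have hn_pos : 0 < k - h := by linarith
  -- divisibilities
  have hdvd1 : (k - h) ∣ (h * x₀ - 1) := by
    have := hmod.dvd
    simpa using (dvd_neg.mpr this)
  have hx1 : 1 ≤ x₀ := by linarith
  have hdvd2 : (k - h) ∣ (k * x₀ - 1) := by
    have : k * x₀ - 1 = (h * x₀ - 1) + (k - h) * x₀ := by ring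
    rw [this]; exact dvd_add hdvd1 (Dvd.intro _ rfl)
  refine ⟨hdvd1, hdvd2, ?_⟩
  obtain ⟨a, ha⟩ := hdvd1
  obtain ⟨b, hb⟩ := hdvd2
  -- key unimodularity
  have key : h * b - k * a = 1 := by
    have hne : k - h ≠ 0 := hn_pos.ne'
    have : (k - h) * (h * b - k * a) = (k - h) * 1 := by
      linear_combination k * ha - h * hb
    exact mul_left_cancel₀ hne this
  have hba : b - a = x₀ := by
    have hne : k - h ≠ 0 := hn_pos.ne'
    have : (k - h) * (b - a) = (k - h) * x₀ := by
      linear_combination ha - hb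
    exact mul_left_cancel₀ hne this
  have ha0 : 0 ≤ a := by nlinarith
  have hb1 : 1 ≤ b := by nlinarith
  have ham : a ≤ (m : ℤ) := by nlinarith
  have hbm : b ≤ 2 * (m : ℤ) := by linarith
  -- the candidate rational
  have hcop : Nat.Coprime a.natAbs b.natAbs := by
    have : IsCoprime a b := ⟨-k, h, by linarith [key]⟩
    exact Int.isCoprime_iff_gcd_eq_one.mp this
  have hb0 : (0 : ℤ) < b := hb1
  have hpnum : ((a : ℚ) / (b : ℚ)).num = a := Rat.num_div_eq_of_coprime hb0 hcop
  have hpden : (((a : ℚ) / (b : ℚ)).den : ℤ) = b := Rat.den_div_eq_of_coprime hb0 hcop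
  have hexpr : ((h * x₀ - 1 : ℤ) : ℚ) / ((k * x₀ - 1 : ℤ) : ℚ) = (a : ℚ) / (b : ℚ) := by
    rw [ha, hb]
    push_cast
    rw [mul_div_mul_left]
    exact_mod_cast hn_pos.ne'
  rw [hexpr]
  set p : ℚ := (a : ℚ) / (b : ℚ) with hp
  have hbQ : (0 : ℚ) < (b : ℚ) := by exact_mod_cast hb0
  have hkQ : (0 : ℚ) < (k : ℚ) := by exact_mod_cast hden_pos
  have hpltq : p < q := by
    rw [hp, hqeq, div_lt_div_iff₀ hbQ hkQ]
    have : (a : ℚ) * k + 1 = h * b := by exact_mod_cast by linarith [key]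
    linarith [this]
  constructor
  · refine ⟨⟨?_, ?_, ?_, ?_, ?_⟩, hpltq⟩
    · positivity
    · rw [hp, div_le_one hbQ]; exact_mod_cast by linarith
    · have : (p.den : ℤ) ≤ 2 * (m : ℤ) := by rw [hpden]; exact hbm
      exact_mod_cast this
    · rw [hpnum]; exact ham
    · rw [hpnum, hpden]; linarith
  · rintro f ⟨⟨hf0, hf1, hfden, hfnum, hfdiff⟩, hfq⟩
    by_contra hcon
    push_neg at hcon
    set c : ℤ := f.num with hc
    set d : ℤ := (f.den : ℤ) with hd
    have hd0 : (0 : ℤ) < d := by positivity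
    have hdQ : (0 : ℚ) < (d : ℚ) := by exact_mod_cast hd0
    have hfeq : f = (c : ℚ) / (d : ℚ) := (Rat.num_div_den f).symm
    have e1 : 1 ≤ h * d - k * c := by
      have : (c : ℚ) / (d : ℚ) < (h : ℚ) / (k : ℚ) := by rw [← hfeq, ← hqeq]; exact hfq
      rw [div_lt_div_iff₀ hdQ hkQ] at this
      have : c * k < h * d := by exact_mod_cast this
      linarith
    have e2 : 1 ≤ b * c - a * d := by
      have : (a : ℚ) / (b : ℚ) < (c : ℚ) / (d : ℚ) := by rw [← hfeq]; exact hcon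
      rw [div_lt_div_iff₀ hbQ hdQ] at this
      have : a * d < c * b := by exact_mod_cast this
      linarith
    have iden : d - c = (b - a) * (h * d - k * c) + (k - h) * (b * c - a * d) := by
      linear_combination (c - d) * key
    have t1 : b - a ≤ (b - a) * (h * d - k * c) := le_mul_of_one_le_right (by linarith) e1
    have t2 : k - h ≤ (k - h) * (b * c - a * d) := le_mul_of_one_le_right hn_pos.le e2
    linarith [iden, t1, t2, hfdiff, hlo]
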